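/- Let T be a 4×4 matrix with complex entries. Then the following are equivalent: (a) all 3×3 minors of T vanish and all 2×2 minors of the 3×3 submatrix of T obtained by deleting the first row and the first column vanish; (b) either all 2×2 minors of the 3×4 submatrix obtained from T by deleting the first row vanish, or all 2×2 minors of the 4×3 submatrix obtained from T by deleting the first column vanish. Equivalently, in rank terms: rank T ≤ 2 and the lower-right 3×3 submatrix of T has rank ≤ 1 if and only if the matrix formed by the last three rows of T has rank ≤ 1 or the matrix formed by the last three columns of T has rank ≤ 1. -/

import Mathlib

open Matrix

section Aux

set_option linter.unusedSectionVars false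

variable {m n k : Type*} [Fintype m] [Fintype n] [Fintype k]

/-- submatrix as a product of selection matrices -/
lemma submatrix_eq_mul [DecidableEq m] [DecidableEq n]
    (M : Matrix m n ℂ) (f : k → m) (g : k → n) :
    M.submatrix f g =
      (Matrix.of fun i j => if f i = j then (1:ℂ) else 0) * M *
      (Matrix.of fun i j => if i = g j then (1:ℂ) else 0) := by
  ext i j
  simp [Matrix.mul_apply, Finset.sum_ite_eq, Finset.sum_ite_eq']

lemma rank_submatrix_le'' [DecidableEq m] [DecidableEq n]
    (M : Matrix m n ℂ) (f : k → m) (g : k → n) :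
    (M.submatrix f g).rank ≤ M.rank := by
  rw [submatrix_eq_mul M f g]
  exact (Matrix.rank_mul_le_left _ _).trans
    (Matrix.rank_mul_le_right _ _)

lemma card_le_rank_of_det_ne [DecidableEq m] [DecidableEq n] [DecidableEq k]
    (M : Matrix m n ℂ) (f : k → m) (g : k → n)
    (h : (M.submatrix f g).det ≠ 0) : Fintype.card k ≤ M.rank := by
  have hu : IsUnit (M.submatrix f g) :=
    (Matrix.isUnit_iff_isUnit_det _).mpr (isUnit_iff_ne_zero.mpr h)
  rw [← Matrix.rank_of_isUnit _ hu]
  exact rank_submatrix_le'' M f g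

lemma rank_le_one_of_outer (M : Matrix m n ℂ) (u : m → ℂ) (v : n → ℂ)
    (h : ∀ i j, M i j = u i * v j) : M.rank ≤ 1 := by
  have : M = (Matrix.of fun i (_ : Unit) => u i) * (Matrix.of fun (_ : Unit) j => v j) := by
    ext i j; simp [Matrix.mul_apply, h]
  rw [this]
  exact (Matrix.rank_mul_le_right _ _).trans
    ((Matrix.rank_le_card_height _).trans (by simp))

lemma rank_add_le' (A B : Matrix m n ℂ) : (A + B).rank ≤ A.rank + B.rank := by
  classical
  have hr : LinearMap.range (A + B).mulVecLin ≤
      LinearMap.range A.mulVecLin ⊔ LinearMap.range B.mulVecLin := by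
    rintro x ⟨y, rfl⟩
    exact Submodule.mem_sup.mpr ⟨A.mulVecLin y, ⟨y, rfl⟩, B.mulVecLin y, ⟨y, rfl⟩, by
      simp [Matrix.mulVecLin_add]⟩
  calc (A + B).rank ≤ Module.finrank ℂ
        (LinearMap.range A.mulVecLin ⊔ LinearMap.range B.mulVecLin : Submodule ℂ (m → ℂ)) :=
        Submodule.finrank_mono hr
    _ ≤ A.rank + B.rank := Submodule.finrank_add_le_finrank_add_finrank _ _

/-- vanishing 2x2 minors from rank ≤ 1 -/
lemma minor_eq_of_rank_le_one [DecidableEq m] [DecidableEq n] (M : Matrix m n ℂ)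
    (h : M.rank ≤ 1) (i₁ i₂ : m) (j₁ j₂ : n) :
    M i₁ j₁ * M i₂ j₂ = M i₁ j₂ * M i₂ j₁ := by
  by_contra hne
  have hdet : (M.submatrix ![i₁, i₂] ![j₁, j₂]).det ≠ 0 := by
    rw [Matrix.det_fin_two]
    simpa using sub_ne_zero.mpr hne
  have := card_le_rank_of_det_ne M ![i₁, i₂] ![j₁, j₂] hdet
  simp at this
  omega

lemma outer_of_rank_le_one [DecidableEq m] [DecidableEq n] (M : Matrix m n ℂ)
    (h : M.rank ≤ 1) : ∃ (u : m → ℂ) (v : n → ℂ), ∀ i j, M i j = u i * v j := by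
  by_cases h0 : M = 0
  · exact ⟨fun _ => 0, fun _ => 0, by simp [h0]⟩
  · have : ∃ i j, M i j ≠ 0 := by
      by_contra hc
      push_neg at hc
      exact h0 (by ext i j; simp [hc])
    obtain ⟨i₀, j₀, h₀⟩ := this
    refine ⟨fun i => M i j₀, fun j => M i₀ j / M i₀ j₀, fun i j => ?_⟩
    have := minor_eq_of_rank_le_one M h i i₀ j j₀
    field_simp
    linear_combination this

end Aux

/-- For a 4×4 complex matrix `T`: `rank T ≤ 2` and the lower-right 3×3 submatrix
(obtained by deleting the first row and the first column) has rank ≤ 1, if and only if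
the 3×4 matrix formed by the last three rows of `T` has rank ≤ 1 or the 4×3 matrix
formed by the last three columns of `T` has rank ≤ 1. -/
theorem stmt_1 (T : Matrix (Fin 4) (Fin 4) ℂ) :
    (T.rank ≤ 2 ∧ (T.submatrix (Fin.succ : Fin 3 → Fin 4) (Fin.succ : Fin 3 → Fin 4)).rank ≤ 1)
      ↔
    ((T.submatrix (Fin.succ : Fin 3 → Fin 4) (id : Fin 4 → Fin 4)).rank ≤ 1 ∨
      (T.submatrix (id : Fin 4 → Fin 4) (Fin.succ : Fin 3 → Fin 4)).rank ≤ 1) := by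
  constructor
  · rintro ⟨h2, hD⟩
    obtain ⟨u, v, huv⟩ := outer_of_rank_le_one _ hD
    have huv' : ∀ (i j : Fin 3), T i.succ j.succ = u i * v j := fun i j => huv i j
    by_cases hD0 : ∀ (i j : Fin 3), T i.succ j.succ = 0
    · -- D = 0 : the last three rows are supported on column 0
      left
      refine rank_le_one_of_outer _ (fun i => T i.succ 0)
        (fun j => if j = 0 then 1 else 0) (fun i j => ?_)
      refine Fin.cases ?_ (fun j => ?_) j
      · simp
      · simp [Matrix.submatrix_apply, Fin.succ_ne_zero, hD0]
    · push_neg at hD0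
      obtain ⟨i₀, j₀, h₀⟩ := hD0
      have hu0 : u i₀ ≠ 0 := fun h => h₀ (by rw [huv' i₀ j₀, h, zero_mul])
      have hv0 : v j₀ ≠ 0 := fun h => h₀ (by rw [huv' i₀ j₀, h, mul_zero])
      by_cases hc : ∀ i : Fin 3, T i.succ 0 * u i₀ = T i₀.succ 0 * u i
      · -- first column is parallel to u
        left
        refine rank_le_one_of_outer _ u (Fin.cons (T i₀.succ 0 / u i₀) v) (fun i j => ?_)
        refine Fin.cases ?_ (fun j => ?_) j
        · rw [Fin.cons_zero]
          have := hc i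
          simp only [Matrix.submatrix_apply, id]
          field_simp
          linear_combination this
        · rw [Fin.cons_succ]
          exact huv' i j
      · push_neg at hc
        obtain ⟨i₁, hi₁⟩ := hc
        have hb : ∀ j : Fin 3, T 0 j.succ * v j₀ = T 0 j₀.succ * v j := by
          by_contra hbc
          push_neg at hbc
          obtain ⟨j₁, hj₁⟩ := hbc
          have hdet : (T.submatrix ![0, i₀.succ, i₁.succ] ![0, j₀.succ, j₁.succ]).det ≠ 0 := by
            have e00 := huv' i₀ j₀
            have e01 := huv' i₀ j₁
            have e10 := huv' i₁ j₀
            have e11 := huv' i₁ j₁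
            have : (T.submatrix ![0, i₀.succ, i₁.succ] ![0, j₀.succ, j₁.succ]).det
                = (T i₀.succ 0 * u i₁ - T i₁.succ 0 * u i₀) *
                  (T 0 j₁.succ * v j₀ - T 0 j₀.succ * v j₁) := by
              rw [Matrix.det_fin_three]
              simp only [Matrix.submatrix_apply, Matrix.cons_val_zero, Matrix.cons_val_one,
                Matrix.head_cons, Matrix.cons_val_two, Matrix.tail_cons]
              rw [e00, e01, e10, e11]
              ring
            rw [this]
            exact mul_ne_zero (sub_ne_zero.mpr (fun h => hi₁ h.symm))
              (sub_ne_zero.mpr hj₁)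
          have h3 := card_le_rank_of_det_ne T _ _ hdet
          simp at h3
          omega
        right
        refine rank_le_one_of_outer _ (Fin.cons (T 0 j₀.succ / v j₀) u) v (fun i j => ?_)
        refine Fin.cases ?_ (fun i => ?_) i
        · rw [Fin.cons_zero]
          have := hb j
          simp only [Matrix.submatrix_apply, id]
          field_simp
          linear_combination this
        · rw [Fin.cons_succ]
          exact huv' i j
  · rintro (hM | hN)
    · obtain ⟨u, v, huv⟩ := outer_of_rank_le_one _ hM
      have huv' : ∀ (i : Fin 3) (j : Fin 4), T i.succ j = u i * v j := fun i j => huv i j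
      constructor
      · have hT : T = (Matrix.of fun i j => (if i = 0 then (1:ℂ) else 0) * T 0 j) +
            (Matrix.of fun i j => (Fin.cons (0:ℂ) u : Fin 4 → ℂ) i * v j) := by
          ext i j
          refine Fin.cases ?_ (fun i => ?_) i
          · simp
          · simp [huv' i j, Fin.succ_ne_zero]
        rw [hT]
        calc _ ≤ _ := rank_add_le' _ _
          _ ≤ 1 + 1 := add_le_add
              (rank_le_one_of_outer _ (fun i => if i = 0 then (1:ℂ) else 0) (T 0) fun i j => rfl)
              (rank_le_one_of_outer _ (Fin.cons (0:ℂ) u : Fin 4 → ℂ) v fun i j => rfl)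
          _ ≤ 2 := by norm_num
      · exact rank_le_one_of_outer _ u (fun j => v j.succ) (fun i j => huv' i j.succ)
    · obtain ⟨u, v, huv⟩ := outer_of_rank_le_one _ hN
      have huv' : ∀ (i : Fin 4) (j : Fin 3), T i j.succ = u i * v j := fun i j => huv i j
      constructor
      · have hT : T = (Matrix.of fun i j => T i 0 * (if j = 0 then (1:ℂ) else 0)) +
            (Matrix.of fun i j => u i * (Fin.cons (0:ℂ) v : Fin 4 → ℂ) j) := by
          ext i j
          refine Fin.cases ?_ (fun j => ?_) j
          · simp
          · simp [huv' i j, Fin.succ_ne_zero]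
        rw [hT]
        calc _ ≤ _ := rank_add_le' _ _
          _ ≤ 1 + 1 := add_le_add
              (rank_le_one_of_outer _ (fun i => T i 0) (fun j => if j = 0 then (1:ℂ) else 0)
                fun i j => rfl)
              (rank_le_one_of_outer _ u (Fin.cons (0:ℂ) v : Fin 4 → ℂ) fun i j => rfl)
          _ ≤ 2 := by norm_num
      · exact rank_le_one_of_outer _ (fun i => u i.succ) v (fun i j => huv' i.succ j)
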